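/- Let F be a regular flow on ℝ² and let s₁, s₂ be two distinct inseparable orbits of F. Then no orbit of F separates s₁ from s₂: there is no orbit γ of F, disjoint from s₁ and from s₂, such that s₁ and s₂ are contained in different connected components of ℝ² ∖ γ. -/
import Mathlib


open Set Filter Topology

/-- A (continuous-time) flow on a topological space. -/
def IsFlow {X : Type*} [TopologicalSpace X] (F : ℝ → X → X) : Prop :=
  Continuous (fun q : ℝ × X => F q.1 q.2) ∧ (∀ x, F 0 x = x) ∧
    ∀ t s x, F t (F s x) = F (t + s) x

/-- The forward orbit O⁺(p). -/
def fwdOrbit {X : Type*} (F : ℝ → X → X) (p : X) : Set X :=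
  {q | ∃ t : ℝ, 0 ≤ t ∧ F t p = q}

/-- The backward orbit O⁻(p). -/
def bwdOrbit {X : Type*} (F : ℝ → X → X) (p : X) : Set X :=
  {q | ∃ t : ℝ, t ≤ 0 ∧ F t p = q}

/-- The orbit O(p) = O⁻(p) ∪ O⁺(p). -/
def flowOrbit {X : Type*} (F : ℝ → X → X) (p : X) : Set X :=
  bwdOrbit F p ∪ fwdOrbit F p

/-- The orbit relation O_F. -/
def orbitRel {X : Type*} (F : ℝ → X → X) : Set (X × X) :=
  {z | z.2 ∈ fwdOrbit F z.1}

/-- The prolongational relation P_F: the closure of the orbit relation. -/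
def prolongRel {X : Type*} [TopologicalSpace X] (F : ℝ → X → X) : Set (X × X) :=
  closure (orbitRel F)

/-- Down(p) = {q | (p,q) ∈ P_F}. -/
def downSet {X : Type*} [TopologicalSpace X] (F : ℝ → X → X) (p : X) : Set X :=
  {q | (p, q) ∈ prolongRel F}

/-- The first prolongational limit set Λ¹(p). -/
def lambda1 {X : Type*} [MetricSpace X] (F : ℝ → X → X) (p : X) : Set X :=
  {q | ∀ ε > (0 : ℝ), ∀ T > (0 : ℝ), ∃ x : X, ∃ t : ℝ,
    T ≤ t ∧ dist x p < ε ∧ dist (F t x) q < ε}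

/-- The first prolongation D¹(p). -/
def prolong1 {X : Type*} [MetricSpace X] (F : ℝ → X → X) (p : X) : Set X :=
  {q | ∀ ε > (0 : ℝ), ∃ x : X, ∃ t : ℝ, 0 < t ∧ dist x p < ε ∧ dist (F t x) q < ε}

/-- The set NW_F of non-wandering points. -/
def nonWanderingSet {X : Type*} [MetricSpace X] (F : ℝ → X → X) : Set X :=
  {p | p ∈ lambda1 F p}

/-- A flow is wandering when it has no non-wandering point. -/
def IsWandering {X : Type*} [MetricSpace X] (F : ℝ → X → X) : Prop :=
  nonWanderingSet F = ∅

/-- The ω-limit set of p. -/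
def omegaLimitSet {X : Type*} [TopologicalSpace X] (F : ℝ → X → X) (p : X) : Set X :=
  {q | ∃ t : ℕ → ℝ, Tendsto t atTop atTop ∧ Tendsto (fun n => F (t n) p) atTop (𝓝 q)}

/-- The α-limit set of p. -/
def alphaLimitSet {X : Type*} [TopologicalSpace X] (F : ℝ → X → X) (p : X) : Set X :=
  {q | ∃ t : ℕ → ℝ, Tendsto t atTop atBot ∧ Tendsto (fun n => F (t n) p) atTop (𝓝 q)}

/-- The plane with the Euclidean distance. -/
abbrev Plane := EuclideanSpace ℝ (Fin 2)

/-- A flow on the plane is regular if near every point it is locally topologically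
equivalent to the flow of a constant vector field: there is a homeomorphism of a
neighborhood onto an open set sending the local orbits into horizontal lines. -/
def IsRegularFlow (F : ℝ → Plane → Plane) : Prop :=
  ∀ p : Plane, ∃ U V : Set Plane, IsOpen U ∧ IsOpen V ∧ p ∈ U ∧
    ∃ φ : U ≃ₜ V, ∀ q y : U, (y : Plane) ∈ flowOrbit F (q : Plane) →
      (φ y : Plane) 1 = (φ q : Plane) 1

/-- A set is saturated if it contains the full orbit of each of its points. -/
def FlowSaturated (F : ℝ → Plane → Plane) (A : Set Plane) : Prop :=
  ∀ p ∈ A, flowOrbit F p ⊆ A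

/-- Two (distinct) orbits are inseparable if any two saturated open sets containing
them respectively must intersect. -/
def OrbitsInseparable (F : ℝ → Plane → Plane) (s₁ s₂ : Set Plane) : Prop :=
  ∀ U₁ U₂ : Set Plane, IsOpen U₁ → IsOpen U₂ → FlowSaturated F U₁ → FlowSaturated F U₂ →
    s₁ ⊆ U₁ → s₂ ⊆ U₂ → (U₁ ∩ U₂).Nonempty

/-- s is an orbit of F. -/
def IsOrbit (F : ℝ → Plane → Plane) (s : Set Plane) : Prop :=
  ∃ a : Plane, s = flowOrbit F a

/-- A separatrix: an orbit inseparable from some other orbit. -/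
def IsSeparatrix (F : ℝ → Plane → Plane) (s : Set Plane) : Prop :=
  IsOrbit F s ∧ ∃ s' : Set Plane, IsOrbit F s' ∧ s' ≠ s ∧ OrbitsInseparable F s s'

/-- s₁ ≻ s₂ : the distinct inseparable orbits s₁, s₂ satisfy (p,q) ∈ P_F for some
p ∈ s₁, q ∈ s₂. -/
def OrbPrec (F : ℝ → Plane → Plane) (s₁ s₂ : Set Plane) : Prop :=
  s₁ ≠ s₂ ∧ OrbitsInseparable F s₁ s₂ ∧ ∃ p ∈ s₁, ∃ q ∈ s₂, (p, q) ∈ prolongRel F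

/-- γ separates A from B: γ is disjoint from A and B, and A and B lie in different
connected components of the complement of γ. -/
def SeparatesSets (γ A B : Set Plane) : Prop :=
  γ ∩ A = ∅ ∧ γ ∩ B = ∅ ∧
    ∀ x ∈ A, ∀ y ∈ B, connectedComponentIn γᶜ x ≠ connectedComponentIn γᶜ y

/-- No orbit of a regular planar flow separates two inseparable orbits. -/
lemma flowOrbit_eq_range {X : Type*} (F : ℝ → X → X) (p : X) :
    flowOrbit F p = Set.range (fun t : ℝ => F t p) := by
  ext q
  constructor
  · rintro (⟨t, _, ht⟩ | ⟨t, _, ht⟩) <;> exact ⟨t, ht⟩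
  · rintro ⟨t, ht⟩
    rcases le_total t 0 with h | h
    · exact Or.inl ⟨t, h, ht⟩
    · exact Or.inr ⟨t, h, ht⟩

lemma mem_flowOrbit_self {X : Type*} (F : ℝ → X → X) (hF0 : ∀ x, F 0 x = x) (p : X) :
    p ∈ flowOrbit F p := Or.inr ⟨0, le_refl 0, hF0 p⟩

lemma flowOrbit_eq_of_mem {X : Type*} (F : ℝ → X → X)
    (hF0 : ∀ x, F 0 x = x) (hFa : ∀ t s x, F t (F s x) = F (t + s) x)
    {p q : X} (hq : q ∈ flowOrbit F p) : flowOrbit F q = flowOrbit F p := by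
  rw [flowOrbit_eq_range] at hq ⊢
  rw [flowOrbit_eq_range]
  obtain ⟨s, hs⟩ := hq
  ext z
  constructor
  · rintro ⟨t, rfl⟩
    exact ⟨t + s, by simp only [← hFa, hs]⟩
  · rintro ⟨t, rfl⟩
    refine ⟨t - s, ?_⟩
    show F (t - s) q = F t p
    rw [← hs]
    show F (t-s) (F s p) = F t p
    rw [hFa, sub_add_cancel]

lemma flowOrbit_preconnected (F : ℝ → Plane → Plane) (hF : IsFlow F) (p : Plane) :
    IsPreconnected (flowOrbit F p) := by
  rw [flowOrbit_eq_range]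
  exact (isConnected_range (hF.1.comp (continuous_id.prodMk continuous_const))).isPreconnected

lemma coord_dist_le (z w : Plane) (i : Fin 2) : dist (z i) (w i) ≤ dist z w := by
  rw [EuclideanSpace.dist_eq]
  calc dist (z i) (w i) = √(dist (z i) (w i) ^ 2) := (Real.sqrt_sq dist_nonneg).symm
    _ ≤ _ := Real.sqrt_le_sqrt (Finset.single_le_sum
        (f := fun j => dist (z j) (w j) ^ 2) (fun j _ => sq_nonneg _) (Finset.mem_univ i))

lemma preimage_val_preconnected {V : Set Plane} {T : Set Plane} (hTV : T ⊆ V)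
    (hT : IsPreconnected T) : IsPreconnected ((Subtype.val ⁻¹' T : Set V)) := by
  rw [← IsInducing.subtypeVal.isPreconnected_image]
  rwa [Set.image_preimage_eq_inter_range, Subtype.range_coe,
    Set.inter_eq_self_of_subset_left hTV]
lemma flow_loc (F : ℝ → Plane → Plane) (hF : IsFlow F) (hreg : IsRegularFlow F)
    (c₀ x : Plane) (M₀ : Set Plane) (hM₀ : IsOpen M₀) (hxM₀ : x ∈ M₀) :
    ∃ (N : Set Plane) (u v : Plane), IsOpen N ∧ x ∈ N ∧ N ⊆ M₀ ∧
      u ∉ flowOrbit F c₀ ∧ v ∉ flowOrbit F c₀ ∧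
      (∀ q ∈ N, q ∉ flowOrbit F c₀ →
        connectedComponentIn (flowOrbit F c₀)ᶜ q = connectedComponentIn (flowOrbit F c₀)ᶜ u ∨
        connectedComponentIn (flowOrbit F c₀)ᶜ q = connectedComponentIn (flowOrbit F c₀)ᶜ v) ∧
      (∀ h ∈ N, h ∈ flowOrbit F c₀ → ∀ M : Set Plane, IsOpen M → h ∈ M →
        (∃ a, a ∈ M ∧ a ∉ flowOrbit F c₀ ∧ connectedComponentIn (flowOrbit F c₀)ᶜ a
            = connectedComponentIn (flowOrbit F c₀)ᶜ u) ∧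
        (∃ a, a ∈ M ∧ a ∉ flowOrbit F c₀ ∧ connectedComponentIn (flowOrbit F c₀)ᶜ a
            = connectedComponentIn (flowOrbit F c₀)ᶜ v)) ∧
      (x ∉ flowOrbit F c₀ → ∀ q ∈ N, q ∉ flowOrbit F c₀ →
        connectedComponentIn (flowOrbit F c₀)ᶜ q = connectedComponentIn (flowOrbit F c₀)ᶜ x) := by
  classical
  obtain ⟨hcont, hF0, hFa⟩ := hF
  set γ := flowOrbit F c₀ with hγdef
  obtain ⟨U, V, hU, hV, hxU, φ, hφ⟩ := hreg x
  set lv : U → ℝ := fun q => (φ q : Plane) 1 with hlvdef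
  have hγlev2 : ∀ q r : U, (q : Plane) ∈ γ → (r : Plane) ∈ γ → lv r = lv q := by
    intro q r hq hr
    refine hφ q r ?_
    rw [flowOrbit_eq_of_mem F hF0 hFa hq]
    exact hr
  set c : ℝ := if hex : ∃ q : U, (q : Plane) ∈ γ then lv hex.choose else lv ⟨x, hxU⟩ + 1
    with hcdef
  have hc : ∀ q : U, (q : Plane) ∈ γ → lv q = c := by
    intro q hq
    rw [hcdef, dif_pos ⟨q, hq⟩]
    exact hγlev2 _ _ (⟨q, hq⟩ : ∃ q : U, (q : Plane) ∈ γ).choose_spec hq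
  set η : V → Plane := fun z => ((φ.symm z : U) : Plane) with hηdef
  have hηc : Continuous η := continuous_subtype_val.comp φ.symm.continuous
  have hηγ : ∀ z : V, η z ∈ γ → (z : Plane) 1 = c := by
    intro z hz
    have h1 := hc (φ.symm z) hz
    rw [hlvdef] at h1
    simpa using h1
  have hηopen : IsOpenMap η := IsOpenMap.comp hU.isOpenMap_subtype_val φ.symm.isOpenMap
  set ζ : V := φ ⟨x, hxU⟩ with hζdef
  have hηζ : η ζ = x := by
    rw [hηdef, hζdef]
    simp
  set z₀ : Plane := (ζ : Plane) with hz₀def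
  set d : ℝ := z₀ 1 with hddef
  have hdlv : lv ⟨x, hxU⟩ = d := rfl
  set V' : Set Plane := Subtype.val '' (η ⁻¹' M₀) with hV'def
  have hV'o : IsOpen V' := hV.isOpenMap_subtype_val _ (hM₀.preimage hηc)
  have hz₀V' : z₀ ∈ V' := ⟨ζ, by rw [mem_preimage, hηζ]; exact hxM₀, rfl⟩
  have hV'V : V' ⊆ V := by rintro _ ⟨z, _, rfl⟩; exact z.2
  obtain ⟨r₀, hr₀, hball₀⟩ := Metric.isOpen_iff.mp hV'o z₀ hz₀V'
  -- generic pullback of preconnected sets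
  have hPB : ∀ T : Set Plane, T ⊆ V → IsPreconnected T → (∀ z : V, (z : Plane) ∈ T → η z ∉ γ) →
      ∀ z w : V, (z : Plane) ∈ T → (w : Plane) ∈ T →
      connectedComponentIn γᶜ (η w) = connectedComponentIn γᶜ (η z) := by
    intro T hTV hT hTγ z w hz hw
    have hpre := (preimage_val_preconnected hTV hT).image η hηc.continuousOn
    have hsub : η '' (Subtype.val ⁻¹' T) ⊆ γᶜ := by rintro _ ⟨y, hy, rfl⟩; exact hTγ y hy
    have hmz : η z ∈ η '' (Subtype.val ⁻¹' T) := ⟨z, hz, rfl⟩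
    have hmw : η w ∈ η '' (Subtype.val ⁻¹' T) := ⟨w, hw, rfl⟩
    exact (connectedComponentIn_eq ((hpre.subset_connectedComponentIn hmz hsub) hmw)).symm
  by_cases hd : d = c
  · -- x is at the γ level
    set B : Set Plane := Metric.ball z₀ r₀ with hBdef
    have hBV' : B ⊆ V' := hball₀
    have hBV : B ⊆ V := fun p hp => hV'V (hBV' hp)
    set N : Set Plane := η '' (Subtype.val ⁻¹' B) with hNdef
    have hNopen : IsOpen N := hηopen _ ((Metric.isOpen_ball).preimage continuous_subtype_val)
    have hxN : x ∈ N := ⟨ζ, Metric.mem_ball_self hr₀, hηζ⟩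
    have hNM₀ : N ⊆ M₀ := by
      rintro _ ⟨z, hz, rfl⟩
      obtain ⟨w, hw, hwz⟩ := hBV' hz
      rw [show z = w from Subtype.ext hwz.symm]
      exact hw
    set e1 : Plane := EuclideanSpace.single (1 : Fin 2) (1 : ℝ) with he1def
    have he1norm : ‖e1‖ = 1 := by rw [he1def, EuclideanSpace.norm_single]; norm_num
    have hcoord : ∀ (w : Plane) (t : ℝ), (w + t • e1) 1 = w 1 + t := by
      intro w t
      rw [he1def]
      simp [EuclideanSpace.single_apply]
    have hdistpt : ∀ (w : Plane) (t : ℝ), dist (w + t • e1) w = |t| := by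
      intro w t
      rw [dist_eq_norm, add_sub_cancel_left, norm_smul, he1norm, mul_one, Real.norm_eq_abs]
    set Bp : Set Plane := B ∩ {z : Plane | c < z 1} with hBpdef
    set Bm : Set Plane := B ∩ {z : Plane | z 1 < c} with hBmdef
    have hBpconv : Convex ℝ Bp :=
      (convex_ball z₀ r₀).inter (convex_halfSpace_gt ⟨fun a b => rfl, fun s a => rfl⟩ c)
    have hBmconv : Convex ℝ Bm :=
      (convex_ball z₀ r₀).inter (convex_halfSpace_lt ⟨fun a b => rfl, fun s a => rfl⟩ c)
    have hnearp : ∀ w : Plane, w ∈ B → w 1 = c → ∀ ε > (0:ℝ), ∃ p, p ∈ Bp ∧ dist p w < ε := by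
      intro w hw hwc ε hε
      have hwb : dist w z₀ < r₀ := hw
      set t : ℝ := min ε (r₀ - dist w z₀) / 2 with htdef
      have ht0 : 0 < t := by
        rw [htdef]
        have := lt_min hε (sub_pos.2 hwb)
        linarith
      have ht1 : t < r₀ - dist w z₀ := by
        rw [htdef]
        have h1 : min ε (r₀ - dist w z₀) ≤ r₀ - dist w z₀ := min_le_right _ _
        have h2 : 0 < r₀ - dist w z₀ := sub_pos.2 hwb
        linarith
      have ht2 : t < ε := by
        rw [htdef]
        have h1 : min ε (r₀ - dist w z₀) ≤ ε := min_le_left _ _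
        linarith
      refine ⟨w + t • e1, ⟨?_, ?_⟩, ?_⟩
      · have h3 : dist (w + t • e1) z₀ ≤ dist (w + t • e1) w + dist w z₀ := dist_triangle _ _ _
        rw [hdistpt, abs_of_pos ht0] at h3
        show dist (w + t • e1) z₀ < r₀
        linarith
      · show c < (w + t • e1) 1
        rw [hcoord, hwc]
        linarith
      · rw [hdistpt, abs_of_pos ht0]
        exact ht2
    have hnearm : ∀ w : Plane, w ∈ B → w 1 = c → ∀ ε > (0:ℝ), ∃ p, p ∈ Bm ∧ dist p w < ε := by
      intro w hw hwc ε hε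
      have hwb : dist w z₀ < r₀ := hw
      set t : ℝ := -(min ε (r₀ - dist w z₀) / 2) with htdef
      have ht0 : t < 0 := by
        rw [htdef]
        have := lt_min hε (sub_pos.2 hwb)
        linarith
      have ht1 : -t < r₀ - dist w z₀ := by
        rw [htdef]
        have h1 : min ε (r₀ - dist w z₀) ≤ r₀ - dist w z₀ := min_le_right _ _
        have h2 : 0 < r₀ - dist w z₀ := sub_pos.2 hwb
        simp only [neg_neg]
        linarith
      have ht2 : -t < ε := by
        rw [htdef]
        have h1 : min ε (r₀ - dist w z₀) ≤ ε := min_le_left _ _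
        simp only [neg_neg]
        linarith
      refine ⟨w + t • e1, ⟨?_, ?_⟩, ?_⟩
      · have h3 : dist (w + t • e1) z₀ ≤ dist (w + t • e1) w + dist w z₀ := dist_triangle _ _ _
        rw [hdistpt, abs_of_neg ht0] at h3
        show dist (w + t • e1) z₀ < r₀
        linarith
      · show (w + t • e1) 1 < c
        rw [hcoord, hwc]
        linarith
      · rw [hdistpt, abs_of_neg ht0]
        exact ht2
    have hclp : ∀ w : Plane, w ∈ B → w 1 = c → w ∈ closure Bp := by
      intro w hw hwc
      rw [Metric.mem_closure_iff]
      intro ε hε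
      obtain ⟨p, hp, hdp⟩ := hnearp w hw hwc ε hε
      exact ⟨p, hp, by rwa [dist_comm] at hdp⟩
    have hclm : ∀ w : Plane, w ∈ B → w 1 = c → w ∈ closure Bm := by
      intro w hw hwc
      rw [Metric.mem_closure_iff]
      intro ε hε
      obtain ⟨p, hp, hdp⟩ := hnearm w hw hwc ε hε
      exact ⟨p, hp, by rwa [dist_comm] at hdp⟩
    have hBpγ : ∀ z : V, (z : Plane) ∈ Bp → η z ∉ γ :=
      fun z hz hmem => absurd (hηγ z hmem) (ne_of_gt hz.2)
    have hBmγ : ∀ z : V, (z : Plane) ∈ Bm → η z ∉ γ :=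
      fun z hz hmem => absurd (hηγ z hmem) (ne_of_lt hz.2)
    have keyp : ∀ z w : V, (z : Plane) ∈ Bp →
        ((w : Plane) ∈ Bp ∨ ((w : Plane) ∈ B ∧ (w : Plane) 1 = c)) → η w ∉ γ →
        connectedComponentIn γᶜ (η w) = connectedComponentIn γᶜ (η z) := by
      intro z w hz hw hwγ
      set T : Set Plane := Bp ∪ {(w : Plane)} with hTdef
      have hTcl : T ⊆ closure Bp :=
        union_subset subset_closure
          (singleton_subset_iff.2 (hw.elim (fun h => subset_closure h) (fun h => hclp _ h.1 h.2)))
      have hT : IsPreconnected T :=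
        hBpconv.isPreconnected.subset_closure subset_union_left hTcl
      have hTV : T ⊆ V := union_subset (fun p hp => hBV hp.1) (singleton_subset_iff.2 w.2)
      have hTγ : ∀ y : V, (y : Plane) ∈ T → η y ∉ γ := by
        rintro y (hy | hy)
        · exact hBpγ y hy
        · rw [show y = w from Subtype.ext hy]
          exact hwγ
      exact hPB T hTV hT hTγ z w (subset_union_left hz) (Or.inr rfl)
    have keym : ∀ z w : V, (z : Plane) ∈ Bm →
        ((w : Plane) ∈ Bm ∨ ((w : Plane) ∈ B ∧ (w : Plane) 1 = c)) → η w ∉ γ →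
        connectedComponentIn γᶜ (η w) = connectedComponentIn γᶜ (η z) := by
      intro z w hz hw hwγ
      set T : Set Plane := Bm ∪ {(w : Plane)} with hTdef
      have hTcl : T ⊆ closure Bm :=
        union_subset subset_closure
          (singleton_subset_iff.2 (hw.elim (fun h => subset_closure h) (fun h => hclm _ h.1 h.2)))
      have hT : IsPreconnected T :=
        hBmconv.isPreconnected.subset_closure subset_union_left hTcl
      have hTV : T ⊆ V := union_subset (fun p hp => hBV hp.1) (singleton_subset_iff.2 w.2)
      have hTγ : ∀ y : V, (y : Plane) ∈ T → η y ∉ γ := by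
        rintro y (hy | hy)
        · exact hBmγ y hy
        · rw [show y = w from Subtype.ext hy]
          exact hwγ
      exact hPB T hTV hT hTγ z w (subset_union_left hz) (Or.inr rfl)
    have hzp_mem : z₀ + (r₀ / 2) • e1 ∈ B := by
      show dist (z₀ + (r₀ / 2) • e1) z₀ < r₀
      rw [hdistpt, abs_of_pos (by linarith)]
      linarith
    have hzm_mem : z₀ + (-(r₀ / 2)) • e1 ∈ B := by
      show dist (z₀ + (-(r₀ / 2)) • e1) z₀ < r₀
      rw [hdistpt, abs_of_neg (by linarith)]
      linarith
    set zp : V := ⟨z₀ + (r₀ / 2) • e1, hBV hzp_mem⟩ with hzpdef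
    set zm : V := ⟨z₀ + (-(r₀ / 2)) • e1, hBV hzm_mem⟩ with hzmdef
    have hzpBp : (zp : Plane) ∈ Bp := ⟨hzp_mem, by
      show c < (z₀ + (r₀ / 2) • e1) 1
      rw [hcoord, ← hddef, hd]; linarith⟩
    have hzmBm : (zm : Plane) ∈ Bm := ⟨hzm_mem, by
      show (z₀ + (-(r₀ / 2)) • e1) 1 < c
      rw [hcoord, ← hddef, hd]; linarith⟩
    have huγ : η zp ∉ γ := hBpγ zp hzpBp
    have hvγ : η zm ∉ γ := hBmγ zm hzmBm
    have hi : ∀ q ∈ N, q ∉ γ →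
        connectedComponentIn γᶜ q = connectedComponentIn γᶜ (η zp) ∨
        connectedComponentIn γᶜ q = connectedComponentIn γᶜ (η zm) := by
      rintro _ ⟨z, hzB, rfl⟩ hqγ
      rcases lt_trichotomy c ((z : Plane) 1) with h | h | h
      · exact Or.inl (keyp zp z hzpBp (Or.inl ⟨hzB, h⟩) hqγ)
      · exact Or.inl (keyp zp z hzpBp (Or.inr ⟨hzB, h.symm⟩) hqγ)
      · exact Or.inr (keym zm z hzmBm (Or.inl ⟨hzB, h⟩) hqγ)
    refine ⟨N, η zp, η zm, hNopen, hxN, hNM₀, huγ, hvγ, hi, ?_, ?_⟩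
    · rintro _ ⟨zh, hzhB, rfl⟩ hhγ M hMo hMh
      have hlz : (zh : Plane) 1 = c := hηγ zh hhγ
      obtain ⟨ε, hε, hsub⟩ := Metric.isOpen_iff.mp (hMo.preimage hηc) zh hMh
      constructor
      · obtain ⟨p, hpBp, hpd⟩ := hnearp (zh : Plane) hzhB hlz ε hε
        set y : V := ⟨p, hBV hpBp.1⟩ with hydef
        have hyM : η y ∈ M := hsub (show y ∈ Metric.ball zh ε by
          rw [Metric.mem_ball, Subtype.dist_eq]; exact hpd)
        exact ⟨η y, hyM, hBpγ y hpBp, keyp zp y hzpBp (Or.inl hpBp) (hBpγ y hpBp)⟩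
      · obtain ⟨p, hpBm, hpd⟩ := hnearm (zh : Plane) hzhB hlz ε hε
        set y : V := ⟨p, hBV hpBm.1⟩ with hydef
        have hyM : η y ∈ M := hsub (show y ∈ Metric.ball zh ε by
          rw [Metric.mem_ball, Subtype.dist_eq]; exact hpd)
        exact ⟨η y, hyM, hBmγ y hpBm, keym zm y hzmBm (Or.inl hpBm) (hBmγ y hpBm)⟩
    · intro hxγ q hq hqγ
      have hζB : (ζ : Plane) ∈ B := Metric.mem_ball_self hr₀
      have hζlev : (ζ : Plane) 1 = c := hd ▸ rfl
      have hxu : connectedComponentIn γᶜ x = connectedComponentIn γᶜ (η zp) := by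
        have h := keyp zp ζ hzpBp (Or.inr ⟨hζB, hζlev⟩) (by rwa [hηζ])
        rwa [hηζ] at h
      have hxv : connectedComponentIn γᶜ x = connectedComponentIn γᶜ (η zm) := by
        have h := keym zm ζ hzmBm (Or.inr ⟨hζB, hζlev⟩) (by rwa [hηζ])
        rwa [hηζ] at h
      rcases hi q hq hqγ with h | h
      · rw [h, ← hxu]
      · rw [h, ← hxv]
  · -- x is not at the γ level: small ball avoids γ entirely
    have habs : 0 < |d - c| := abs_pos.2 (sub_ne_zero.2 hd)
    set r : ℝ := min r₀ |d - c| with hrdef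
    have hr : 0 < r := lt_min hr₀ habs
    set B : Set Plane := Metric.ball z₀ r with hBdef
    have hBV' : B ⊆ V' := fun p hp => hball₀ (Metric.ball_subset_ball (min_le_left _ _) hp)
    have hBV : B ⊆ V := fun p hp => hV'V (hBV' hp)
    set N : Set Plane := η '' (Subtype.val ⁻¹' B) with hNdef
    have hNopen : IsOpen N := hηopen _ ((Metric.isOpen_ball).preimage continuous_subtype_val)
    have hxN : x ∈ N := ⟨ζ, Metric.mem_ball_self hr, hηζ⟩
    have hNM₀ : N ⊆ M₀ := by
      rintro _ ⟨z, hz, rfl⟩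
      obtain ⟨w, hw, hwz⟩ := hBV' hz
      rw [show z = w from Subtype.ext hwz.symm]
      exact hw
    have hNγ : ∀ z : V, (z : Plane) ∈ B → η z ∉ γ := by
      intro z hz hmem
      have hlvl := hηγ z hmem
      have h1 : dist ((z : Plane) 1) (z₀ 1) ≤ dist (z : Plane) z₀ := coord_dist_le _ _ _
      have h2 : dist (z : Plane) z₀ < r := hz
      rw [hlvl, ← hddef] at h1
      have h3 : dist c d < |d - c| := lt_of_le_of_lt h1 (lt_of_lt_of_le h2 (min_le_right _ _))
      rw [Real.dist_eq, abs_sub_comm] at h3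
      exact lt_irrefl _ h3
    have hxγ : x ∉ γ := fun hmem => hd (hc ⟨x, hxU⟩ hmem)
    have hcompN : ∀ q ∈ N, q ∉ γ →
        connectedComponentIn γᶜ q = connectedComponentIn γᶜ x := by
      rintro _ ⟨z, hz, rfl⟩ _
      have := hPB B hBV (convex_ball z₀ r).isPreconnected hNγ ζ z (Metric.mem_ball_self hr) hz
      rwa [hηζ] at this
    refine ⟨N, x, x, hNopen, hxN, hNM₀, hxγ, hxγ, fun q hq hqγ => Or.inl (hcompN q hq hqγ),
      ?_, fun _ => hcompN⟩
    rintro _ ⟨z, hz, rfl⟩ hhγ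
    exact absurd hhγ (hNγ z hz)
lemma sat_orbit (F : ℝ → Plane → Plane) (hF0 : ∀ x, F 0 x = x)
    (hFa : ∀ t s x, F t (F s x) = F (t + s) x) (c₀ : Plane) :
    FlowSaturated F (flowOrbit F c₀) := by
  intro p hp
  rw [flowOrbit_eq_of_mem F hF0 hFa hp]

lemma sat_compl (F : ℝ → Plane → Plane) (hF0 : ∀ x, F 0 x = x)
    (hFa : ∀ t s x, F t (F s x) = F (t + s) x) {A : Set Plane}
    (hA : FlowSaturated F A) : FlowSaturated F Aᶜ := by
  intro p hp q hq hqA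
  apply hp
  have h1 : flowOrbit F q = flowOrbit F p := flowOrbit_eq_of_mem F hF0 hFa hq
  exact hA q hqA (by rw [h1]; exact mem_flowOrbit_self F hF0 p)

lemma sat_closure (F : ℝ → Plane → Plane) (hF : IsFlow F) {A : Set Plane}
    (hA : FlowSaturated F A) : FlowSaturated F (closure A) := by
  obtain ⟨hcont, hF0, hFa⟩ := hF
  intro p hp q hq
  rw [flowOrbit_eq_range] at hq
  obtain ⟨t, rfl⟩ := hq
  have hmap : Continuous (F t) := hcont.comp (continuous_const.prodMk continuous_id)
  have himg : F t '' A ⊆ A := by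
    rintro _ ⟨y, hy, rfl⟩
    exact hA y hy (by rw [flowOrbit_eq_range]; exact ⟨t, rfl⟩)
  have h1 : F t p ∈ F t '' closure A := mem_image_of_mem _ hp
  exact closure_mono himg (image_closure_subset_closure_image hmap h1)

lemma orbit_subset_comp (F : ℝ → Plane → Plane) (hF : IsFlow F) (c₀ w e : Plane)
    (hw : w ∉ flowOrbit F c₀)
    (hwC : w ∈ connectedComponentIn (flowOrbit F c₀)ᶜ e) :
    flowOrbit F w ⊆ connectedComponentIn (flowOrbit F c₀)ᶜ e := by
  have hF0 := hF.2.1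
  have hFa := hF.2.2
  have hdisj : flowOrbit F w ⊆ (flowOrbit F c₀)ᶜ := by
    intro p hp hpγ
    exact hw (by
      rw [← flowOrbit_eq_of_mem F hF0 hFa hpγ, flowOrbit_eq_of_mem F hF0 hFa hp]
      exact mem_flowOrbit_self F hF0 w)
  rw [connectedComponentIn_eq hwC]
  exact (flowOrbit_preconnected F hF w).subset_connectedComponentIn
    (mem_flowOrbit_self F hF0 w) hdisj

lemma dich (F : ℝ → Plane → Plane) (hF : IsFlow F) (hreg : IsRegularFlow F) (c₀ e : Plane)
    (he : e ∉ flowOrbit F c₀) :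
    (∀ g ∈ flowOrbit F c₀, ¬∃ M : Set Plane, IsOpen M ∧ g ∈ M ∧
      ∀ y ∈ M, y ∉ flowOrbit F c₀ → y ∈ connectedComponentIn (flowOrbit F c₀)ᶜ e) ∨
    (∀ g ∈ flowOrbit F c₀, ∃ M : Set Plane, IsOpen M ∧ g ∈ M ∧
      ∀ y ∈ M, y ∉ flowOrbit F c₀ → y ∈ connectedComponentIn (flowOrbit F c₀)ᶜ e) := by
  classical
  set γ := flowOrbit F c₀ with hγdef
  set C := connectedComponentIn γᶜ e with hCdef
  set P : Plane → Prop := fun g => ∃ M : Set Plane, IsOpen M ∧ g ∈ M ∧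
    ∀ y ∈ M, y ∉ γ → y ∈ C with hPdef
  have heC : e ∈ C := mem_connectedComponentIn he
  have hprop : ∀ g ∈ γ, ¬ P g → ∃ N : Set Plane, IsOpen N ∧ g ∈ N ∧
      ∀ h ∈ N, h ∈ γ → ¬ P h := by
    intro g hgγ hgP
    obtain ⟨N, u, v, hNo, hgN, _, huγ, hvγ, hi, hii, _⟩ :=
      flow_loc F hF hreg c₀ g univ isOpen_univ (mem_univ g)
    refine ⟨N, hNo, hgN, ?_⟩
    intro h hhN hhγ hPh
    obtain ⟨Mh, hMho, hhMh, hMhC⟩ := hPh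
    obtain ⟨⟨ap, hapM, hapγ, hapu⟩, ⟨am, hamM, hamγ, hamv⟩⟩ :=
      hii h hhN hhγ (Mh ∩ N) (hMho.inter hNo) ⟨hhMh, hhN⟩
    have hapC : ap ∈ C := hMhC ap hapM.1 hapγ
    have hamC : am ∈ C := hMhC am hamM.1 hamγ
    have hu : connectedComponentIn γᶜ u = C := by
      rw [← hapu, hCdef, connectedComponentIn_eq hapC]
    have hv : connectedComponentIn γᶜ v = C := by
      rw [← hamv, hCdef, connectedComponentIn_eq hamC]
    refine hgP ⟨N, hNo, hgN, ?_⟩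
    intro y hyN hyγ
    rcases hi y hyN hyγ with hcomp | hcomp
    · have : y ∈ connectedComponentIn γᶜ y := mem_connectedComponentIn hyγ
      rwa [hcomp, hu] at this
    · have : y ∈ connectedComponentIn γᶜ y := mem_connectedComponentIn hyγ
      rwa [hcomp, hv] at this
  rcases Classical.em (∃ g ∈ γ, P g) with hex | hnex
  case inr =>
    left
    exact fun g hgγ hPg => hnex ⟨g, hgγ, hPg⟩
  right
  obtain ⟨g₂, hg₂γ, hg₂P⟩ := hex
  by_contra hbad
  simp only [not_forall, Classical.not_imp] at hbad
  obtain ⟨g₁, hg₁γ, hg₁P⟩ := hbad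
  have hg₁P : ¬ P g₁ := hg₁P
  choose N hNopen hNmem hNbad using fun (g : {g : Plane // g ∈ γ ∧ ¬ P g}) =>
    hprop g g.2.1 g.2.2
  set GO : Set Plane := ⋃₀ {M : Set Plane | IsOpen M ∧ ∀ y ∈ M, y ∉ γ → y ∈ C} with hGOdef
  set BO : Set Plane := ⋃ g, N g with hBOdef
  have hGOopen : IsOpen GO := isOpen_sUnion (fun M hM => hM.1)
  have hBOopen : IsOpen BO := isOpen_iUnion (fun g => hNopen g)
  have hcover : γ ⊆ GO ∪ BO := by
    intro g hg
    by_cases hP : P g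
    · obtain ⟨M, hMo, hgM, hMC⟩ := hP
      exact Or.inl ⟨M, ⟨hMo, hMC⟩, hgM⟩
    · exact Or.inr (mem_iUnion.2 ⟨⟨g, hg, hP⟩, hNmem _⟩)
  have hγpre : IsPreconnected γ := flowOrbit_preconnected F hF c₀
  obtain ⟨h, hhγ, hhGO, hhBO⟩ := hγpre GO BO hGOopen hBOopen hcover
    ⟨g₂, hg₂γ, by
      obtain ⟨M, hMo, hgM, hMC⟩ := hg₂P
      exact ⟨M, ⟨hMo, hMC⟩, hgM⟩⟩
    ⟨g₁, hg₁γ, mem_iUnion.2 ⟨⟨g₁, hg₁γ, hg₁P⟩, hNmem _⟩⟩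
  obtain ⟨M, ⟨hMo, hMC⟩, hhM⟩ := hhGO
  obtain ⟨g, hgN⟩ := mem_iUnion.1 hhBO
  exact hNbad g h hgN hhγ ⟨M, hMo, hhM, hMC⟩
lemma inseparable_symm {F : ℝ → Plane → Plane} {s₁ s₂ : Set Plane}
    (h : OrbitsInseparable F s₁ s₂) : OrbitsInseparable F s₂ s₁ := by
  intro U₁ U₂ h1 h2 h3 h4 h5 h6
  obtain ⟨z, hz2, hz1⟩ := h U₂ U₁ h2 h1 h4 h3 h6 h5
  exact ⟨z, hz1, hz2⟩

lemma adjacent_case (F : ℝ → Plane → Plane) (hF : IsFlow F) (hreg : IsRegularFlow F)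
    (a b c₀ : Plane)
    (hγa : flowOrbit F c₀ ∩ flowOrbit F a = ∅) (hγb : flowOrbit F c₀ ∩ flowOrbit F b = ∅)
    (hKL : connectedComponentIn (flowOrbit F c₀)ᶜ a ≠ connectedComponentIn (flowOrbit F c₀)ᶜ b)
    (hins : OrbitsInseparable F (flowOrbit F a) (flowOrbit F b))
    (hfull : ∀ g ∈ flowOrbit F c₀, ∃ M : Set Plane, IsOpen M ∧ g ∈ M ∧
      ∀ y ∈ M, y ∉ flowOrbit F c₀ → y ∈ connectedComponentIn (flowOrbit F c₀)ᶜ a) : False := by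
  obtain ⟨hcont, hF0, hFa⟩ := hF
  set γ := flowOrbit F c₀ with hγdef
  set K := connectedComponentIn γᶜ a with hKdef
  set L := connectedComponentIn γᶜ b with hLdef
  have hsaγ : ∀ p ∈ flowOrbit F a, p ∉ γ := fun p hp hpγ =>
    (Set.eq_empty_iff_forall_notMem.mp hγa p) ⟨hpγ, hp⟩
  have hsbγ : ∀ p ∈ flowOrbit F b, p ∉ γ := fun p hp hpγ =>
    (Set.eq_empty_iff_forall_notMem.mp hγb p) ⟨hpγ, hp⟩
  have haγ : a ∉ γ := hsaγ a (mem_flowOrbit_self F hF0 a)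
  have hbγ : b ∉ γ := hsbγ b (mem_flowOrbit_self F hF0 b)
  have haK : a ∈ K := mem_connectedComponentIn haγ
  have hs1K : flowOrbit F a ⊆ K := orbit_subset_comp F ⟨hcont, hF0, hFa⟩ c₀ a a haγ haK
  have hs2L : flowOrbit F b ⊆ L :=
    orbit_subset_comp F ⟨hcont, hF0, hFa⟩ c₀ b b hbγ (mem_connectedComponentIn hbγ)
  set Ω := K ∪ γ with hΩdef
  have hΩopen : IsOpen Ω := by
    rw [isOpen_iff_forall_mem_open]
    rintro p (hpK | hpγ)
    · obtain ⟨N, u, v, hNo, hpN, _, _, _, _, _, hiii⟩ :=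
        flow_loc F ⟨hcont, hF0, hFa⟩ hreg c₀ p univ isOpen_univ (mem_univ p)
      have hpγ' : p ∉ γ := fun h => (connectedComponentIn_subset γᶜ a hpK) h
      refine ⟨N, ?_, hNo, hpN⟩
      intro y hyN
      by_cases hyγ : y ∈ γ
      · exact Or.inr hyγ
      · left
        have h1 := hiii hpγ' y hyN hyγ
        have h2 : connectedComponentIn γᶜ a = connectedComponentIn γᶜ p :=
          connectedComponentIn_eq hpK
        have h3 : y ∈ connectedComponentIn γᶜ y := mem_connectedComponentIn hyγ
        rw [h1, ← h2] at h3
        exact h3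
    · obtain ⟨M, hMo, hpM, hMK⟩ := hfull p hpγ
      refine ⟨M, ?_, hMo, hpM⟩
      intro y hyM
      by_cases hyγ : y ∈ γ
      · exact Or.inr hyγ
      · exact Or.inl (hMK y hyM hyγ)
  have hKsat : FlowSaturated F K := fun p hp =>
    orbit_subset_comp F ⟨hcont, hF0, hFa⟩ c₀ p a
      (fun h => connectedComponentIn_subset γᶜ a hp h) hp
  have hΩsat : FlowSaturated F Ω := by
    rintro p (hp | hp)
    · exact fun q hq => Or.inl (hKsat p hp hq)
    · exact fun q hq => Or.inr (sat_orbit F hF0 hFa c₀ p hp hq)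
  set U₂ := (closure Ω)ᶜ with hU₂def
  have hU₂open : IsOpen U₂ := isClosed_closure.isOpen_compl
  have hU₂sat : FlowSaturated F U₂ :=
    sat_compl F hF0 hFa (sat_closure F ⟨hcont, hF0, hFa⟩ hΩsat)
  have hs2U₂ : flowOrbit F b ⊆ U₂ := by
    intro q hq
    have hqγ : q ∉ γ := hsbγ q hq
    obtain ⟨N, u, v, hNo, hqN, _, _, _, _, hii, hiii⟩ :=
      flow_loc F ⟨hcont, hF0, hFa⟩ hreg c₀ q univ isOpen_univ (mem_univ q)
    have hNL : ∀ y ∈ N, y ∉ γ → y ∈ L := by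
      intro y hyN hyγ
      have h1 := hiii hqγ y hyN hyγ
      have h2 : connectedComponentIn γᶜ b = connectedComponentIn γᶜ q :=
        connectedComponentIn_eq (hs2L hq)
      have h3 : y ∈ connectedComponentIn γᶜ y := mem_connectedComponentIn hyγ
      rw [h1, ← h2] at h3
      exact h3
    have hNΩ : N ∩ Ω = ∅ := by
      rw [Set.eq_empty_iff_forall_notMem]
      rintro y ⟨hyN, (hyK | hyγ)⟩
      · have hyγ : y ∉ γ := fun h => connectedComponentIn_subset γᶜ a hyK h
        have hyL : y ∈ L := hNL y hyN hyγ
        exact hKL (by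
          rw [hKdef, hLdef, connectedComponentIn_eq hyK, connectedComponentIn_eq hyL])
      · obtain ⟨My, hMyo, hyMy, hMyK⟩ := hfull y hyγ
        obtain ⟨⟨ap, hapM, hapγ, _⟩, _⟩ :=
          hii y hyN hyγ (My ∩ N) (hMyo.inter hNo) ⟨hyMy, hyN⟩
        have hapK : ap ∈ K := hMyK ap hapM.1 hapγ
        have hapL : ap ∈ L := hNL ap hapM.2 hapγ
        exact hKL (by
          rw [hKdef, hLdef, connectedComponentIn_eq hapK, connectedComponentIn_eq hapL])
    intro hq'
    rw [mem_closure_iff] at hq'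
    obtain ⟨z, hz⟩ := hq' N hNo hqN
    rw [Set.eq_empty_iff_forall_notMem] at hNΩ
    exact hNΩ z hz
  have hs1Ω : flowOrbit F a ⊆ Ω := fun p hp => Or.inl (hs1K hp)
  obtain ⟨z, hz1, hz2⟩ := hins Ω U₂ hΩopen hU₂open hΩsat hU₂sat hs1Ω hs2U₂
  exact hz2 (subset_closure hz1)
theorem stmt_13 (F : ℝ → Plane → Plane) (hF : IsFlow F) (hreg : IsRegularFlow F)
    (a b : Plane) (hne : flowOrbit F a ≠ flowOrbit F b)
    (hins : OrbitsInseparable F (flowOrbit F a) (flowOrbit F b)) :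
    ¬ ∃ c : Plane, SeparatesSets (flowOrbit F c) (flowOrbit F a) (flowOrbit F b) := by
  obtain ⟨hcont, hF0, hFa⟩ := hF
  rintro ⟨c, hγa, hγb, hsep⟩
  set γ := flowOrbit F c with hγdef
  have hsaγ : ∀ p ∈ flowOrbit F a, p ∉ γ := fun p hp hpγ =>
    (Set.eq_empty_iff_forall_notMem.mp hγa p) ⟨hpγ, hp⟩
  have hsbγ : ∀ p ∈ flowOrbit F b, p ∉ γ := fun p hp hpγ =>
    (Set.eq_empty_iff_forall_notMem.mp hγb p) ⟨hpγ, hp⟩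
  have haγ : a ∉ γ := hsaγ a (mem_flowOrbit_self F hF0 a)
  have hbγ : b ∉ γ := hsbγ b (mem_flowOrbit_self F hF0 b)
  have hKL : connectedComponentIn γᶜ a ≠ connectedComponentIn γᶜ b :=
    hsep a (mem_flowOrbit_self F hF0 a) b (mem_flowOrbit_self F hF0 b)
  rcases dich F ⟨hcont, hF0, hFa⟩ hreg c a haγ with hGa | hGa
  case inr => exact adjacent_case F ⟨hcont, hF0, hFa⟩ hreg a b c hγa hγb hKL hins hGa
  rcases dich F ⟨hcont, hF0, hFa⟩ hreg c b hbγ with hGb | hGb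
  case inr =>
    exact adjacent_case F ⟨hcont, hF0, hFa⟩ hreg b a c hγb hγa hKL.symm
      (inseparable_symm hins) hGb
  -- neither component is adjacent to γ : saturate small neighborhoods
  have hloc : ∀ e : Plane, e ∉ γ → ∀ p ∈ flowOrbit F e, ∃ N : Set Plane, IsOpen N ∧ p ∈ N ∧
      ∀ y ∈ N, y ∉ γ → y ∈ connectedComponentIn γᶜ e := by
    intro e heγ p hp
    have hpγ : p ∉ γ := by
      intro h
      apply heγ
      have h1 : flowOrbit F p = γ := flowOrbit_eq_of_mem F hF0 hFa h
      have h2 : flowOrbit F p = flowOrbit F e := flowOrbit_eq_of_mem F hF0 hFa hp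
      rw [← h1, h2]
      exact mem_flowOrbit_self F hF0 e
    obtain ⟨N, u, v, hNo, hpN, _, _, _, _, _, hiii⟩ :=
      flow_loc F ⟨hcont, hF0, hFa⟩ hreg c p univ isOpen_univ (mem_univ p)
    refine ⟨N, hNo, hpN, ?_⟩
    intro y hyN hyγ
    have h1 := hiii hpγ y hyN hyγ
    have hpC : p ∈ connectedComponentIn γᶜ e :=
      orbit_subset_comp F ⟨hcont, hF0, hFa⟩ c e e heγ (mem_connectedComponentIn heγ) hp
    have h2 : connectedComponentIn γᶜ e = connectedComponentIn γᶜ p :=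
      connectedComponentIn_eq hpC
    have h3 : y ∈ connectedComponentIn γᶜ y := mem_connectedComponentIn hyγ
    rw [h1, ← h2] at h3
    exact h3
  choose Na hNao hNam hNaK using hloc a haγ
  choose Nb hNbo hNbm hNbL using hloc b hbγ
  set W₁ : Set Plane := ⋃ (p : Plane) (hp : p ∈ flowOrbit F a), Na p hp with hW₁def
  set W₂ : Set Plane := ⋃ (p : Plane) (hp : p ∈ flowOrbit F b), Nb p hp with hW₂def
  set U₁ : Set Plane := {z : Plane | ∃ t : ℝ, F t z ∈ W₁} with hU₁def
  set U₂ : Set Plane := {z : Plane | ∃ t : ℝ, F t z ∈ W₂} with hU₂def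
  have hW₁o : IsOpen W₁ := isOpen_iUnion fun p => isOpen_iUnion fun hp => hNao p hp
  have hW₂o : IsOpen W₂ := isOpen_iUnion fun p => isOpen_iUnion fun hp => hNbo p hp
  have hFt : ∀ t : ℝ, Continuous fun z => F t z :=
    fun t => hcont.comp (continuous_const.prodMk continuous_id)
  have hU₁o : IsOpen U₁ := by
    have h1 : U₁ = ⋃ t : ℝ, (fun z => F t z) ⁻¹' W₁ := by
      ext z; simp [hU₁def, mem_iUnion]
    rw [h1]
    exact isOpen_iUnion fun t => hW₁o.preimage (hFt t)
  have hU₂o : IsOpen U₂ := by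
    have h1 : U₂ = ⋃ t : ℝ, (fun z => F t z) ⁻¹' W₂ := by
      ext z; simp [hU₂def, mem_iUnion]
    rw [h1]
    exact isOpen_iUnion fun t => hW₂o.preimage (hFt t)
  have hU₁sat : FlowSaturated F U₁ := by
    rintro p ⟨t, ht⟩ q hq
    rw [flowOrbit_eq_range] at hq
    obtain ⟨s, rfl⟩ := hq
    exact ⟨t - s, by show F (t - s) (F s p) ∈ W₁; rw [hFa, sub_add_cancel]; exact ht⟩
  have hU₂sat : FlowSaturated F U₂ := by
    rintro p ⟨t, ht⟩ q hq
    rw [flowOrbit_eq_range] at hq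
    obtain ⟨s, rfl⟩ := hq
    exact ⟨t - s, by show F (t - s) (F s p) ∈ W₂; rw [hFa, sub_add_cancel]; exact ht⟩
  have hs1U₁ : flowOrbit F a ⊆ U₁ := fun p hp =>
    ⟨0, by rw [hF0]; exact mem_iUnion.2 ⟨p, mem_iUnion.2 ⟨hp, hNam p hp⟩⟩⟩
  have hs2U₂ : flowOrbit F b ⊆ U₂ := fun p hp =>
    ⟨0, by rw [hF0]; exact mem_iUnion.2 ⟨p, mem_iUnion.2 ⟨hp, hNbm p hp⟩⟩⟩
  obtain ⟨z, hz1, hz2⟩ := hins U₁ U₂ hU₁o hU₂o hU₁sat hU₂sat hs1U₁ hs2U₂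
  obtain ⟨t₁, ht₁⟩ := hz1
  obtain ⟨t₂, ht₂⟩ := hz2
  obtain ⟨p, hp, hw₁⟩ : ∃ p, ∃ hp : p ∈ flowOrbit F a, F t₁ z ∈ Na p hp := by
    have := ht₁
    rw [hW₁def] at this
    simpa [mem_iUnion] using this
  obtain ⟨q, hq, hw₂⟩ : ∃ q, ∃ hq : q ∈ flowOrbit F b, F t₂ z ∈ Nb q hq := by
    have := ht₂
    rw [hW₂def] at this
    simpa [mem_iUnion] using this
  have hw₁γ : F t₁ z ∉ γ := fun h =>
    hGa (F t₁ z) h ⟨Na p hp, hNao p hp, hw₁, hNaK p hp⟩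
  have hw₂γ : F t₂ z ∉ γ := fun h =>
    hGb (F t₂ z) h ⟨Nb q hq, hNbo q hq, hw₂, hNbL q hq⟩
  have hw₁K : F t₁ z ∈ connectedComponentIn γᶜ a := hNaK p hp _ hw₁ hw₁γ
  have hw₂L : F t₂ z ∈ connectedComponentIn γᶜ b := hNbL q hq _ hw₂ hw₂γ
  have horb : F t₂ z ∈ flowOrbit F (F t₁ z) := by
    rw [flowOrbit_eq_range]
    exact ⟨t₂ - t₁, by show F (t₂ - t₁) (F t₁ z) = F t₂ z; rw [hFa, sub_add_cancel]⟩
  have hw₂K : F t₂ z ∈ connectedComponentIn γᶜ a :=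
    orbit_subset_comp F ⟨hcont, hF0, hFa⟩ c (F t₁ z) a hw₁γ hw₁K horb
  exact hKL (by rw [connectedComponentIn_eq hw₂K, connectedComponentIn_eq hw₂L])
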